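/- Let λ, ν be partitions, q1, q2, u1, u2 ∈ ℂ^× generic, and let s = (k, ν_k + 1) be an addable box of ν with content χ_s = u2 q1^{k-1} q2^{ν_k}. Then the Nekrasov factor N_{λν}(Q; q1, q2) = ∏_{(i,j)∈λ}(1 - Q q2^{-ν_i+j} q1^{λ^t_j-i+1}) ∏_{(i,j)∈ν}(1 - Q q2^{λ_i-j+1} q1^{-ν^t_j+i}) satisfies the recursion N_{λ, ν+s}(u1/u2; q1, q2) / N_{λν}(u1/u2; q1, q2) = Y_λ(χ_s, u1), where ν+s is the partition obtained from ν by adding the box s, Y_λ(z,u) = (1 - u/z) ∏_{(i,j)∈λ} S(u q1^{i-1} q2^{j-1}/z), and S(z) = (1-q1 z)(1-q2 z)/((1-z)(1-q1 q2 z)). -/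

import Mathlib

/-- The transpose of a partition `lam` (1-indexed, supported on `[1,N]`):
`λᵗ_j = #{i : 1 ≤ i ≤ N, λ_i ≥ j}`. -/
def transposeFn (N : ℕ) (lam : ℕ → ℕ) : ℕ → ℕ := fun j =>
  ((Finset.Icc 1 N).filter fun i => j ≤ lam i).card

/-- The Nekrasov factor
`N_{λν}(Q;q1,q2) = ∏_{(i,j)∈λ} (1 - Q q2^{-ν_i+j} q1^{λᵗ_j-i+1})
                 · ∏_{(i,j)∈ν} (1 - Q q2^{λ_i-j+1} q1^{-νᵗ_j+i})`. -/
noncomputable def nek (Q q1 q2 : ℂ) (Nl Nn : ℕ) (lam nu : ℕ → ℕ) : ℂ :=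
  (∏ i ∈ Finset.Icc 1 Nl, ∏ j ∈ Finset.Icc 1 (lam i),
      (1 - Q * q2 ^ ((j : ℤ) - (nu i : ℤ))
             * q1 ^ ((transposeFn Nl lam j : ℤ) - (i : ℤ) + 1)))
  * (∏ i ∈ Finset.Icc 1 Nn, ∏ j ∈ Finset.Icc 1 (nu i),
      (1 - Q * q2 ^ ((lam i : ℤ) - (j : ℤ) + 1)
             * q1 ^ ((i : ℤ) - (transposeFn Nn nu j : ℤ))))

@[to_additive]
lemma prodSplit {M : Type*} [CommMonoid M] (f : ℕ → M) (a b : ℕ) (h : a ≤ b) :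
    ∏ j ∈ Finset.Icc 1 b, f j
      = (∏ j ∈ Finset.Icc 1 a, f j) * ∏ j ∈ Finset.Icc (a+1) b, f j := by
  rw [← Finset.prod_union]
  · apply Finset.prod_congr _ (fun _ _ => rfl)
    ext x; simp only [Finset.mem_union, Finset.mem_Icc]; omega
  · rw [Finset.disjoint_left]
    intro x hx hx'
    simp only [Finset.mem_Icc] at hx hx'; omega

lemma trans_succ (n : ℕ) (lam : ℕ → ℕ) (j : ℕ) :
    transposeFn (n+1) lam j = transposeFn n lam j + if j ≤ lam (n+1) then 1 else 0 := by
  unfold transposeFn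
  have h : Finset.Icc 1 (n+1) = insert (n+1) (Finset.Icc 1 n) := by
    ext x; simp only [Finset.mem_insert, Finset.mem_Icc]; omega
  rw [h, Finset.filter_insert]
  by_cases hc : j ≤ lam (n+1)
  · rw [if_pos hc, if_pos hc, Finset.card_insert_of_notMem]
    intro hmem
    have := Finset.mem_of_mem_filter _ hmem
    simp only [Finset.mem_Icc] at this; omega
  · rw [if_neg hc, if_neg hc, add_zero]

lemma trans_max (n : ℕ) (lam : ℕ → ℕ) (hmono : ∀ i j : ℕ, i ≤ j → lam j ≤ lam i)
    (j : ℕ) (hjn : j ≤ lam n) (hn : 1 ≤ n) : transposeFn n lam j = n := by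
  unfold transposeFn
  rw [Finset.filter_true_of_mem, Nat.card_Icc]
  · omega
  · intro i hi
    simp only [Finset.mem_Icc] at hi
    exact le_trans hjn (hmono i n hi.2)

lemma trans_stable (n n' : ℕ) (h : n ≤ n') (lam : ℕ → ℕ)
    (hsupp : ∀ i, n < i → lam i = 0) (j : ℕ) (hj : 1 ≤ j) :
    transposeFn n' lam j = transposeFn n lam j := by
  unfold transposeFn
  congr 1
  ext x
  simp only [Finset.mem_filter, Finset.mem_Icc]
  constructor
  · rintro ⟨⟨h1, h2⟩, h3⟩
    refine ⟨⟨h1, ?_⟩, h3⟩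
    by_contra hc
    have := hsupp x (by omega); omega
  · rintro ⟨⟨h1, h2⟩, h3⟩
    exact ⟨⟨h1, by omega⟩, h3⟩

lemma tele_m {α : Type*} (g : ℤ → α) (r : ℕ) :
    ({g r} : Multiset α) + ∑ j ∈ Finset.Icc 1 r, {g ((j:ℤ) - 1)}
      = {g 0} + ∑ j ∈ Finset.Icc 1 r, {g (j:ℤ)} := by
  induction r with
  | zero => simp
  | succ n ih =>
      rw [Finset.sum_Icc_succ_top (by omega), Finset.sum_Icc_succ_top (by omega)]
      have e : ((n:ℤ) + 1 - 1) = (n:ℤ) := by ring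
      push_cast
      rw [e]
      calc ({g ((n:ℤ)+1)} : Multiset α) + (∑ j ∈ Finset.Icc 1 n, {g ((j:ℤ) - 1)} + {g (n:ℤ)})
          = ({g (n:ℤ)} + ∑ j ∈ Finset.Icc 1 n, {g ((j:ℤ) - 1)}) + {g ((n:ℤ)+1)} := by abel
        _ = ({g 0} + ∑ j ∈ Finset.Icc 1 n, {g (j:ℤ)}) + {g ((n:ℤ)+1)} := by rw [ih]
        _ = {g 0} + (∑ j ∈ Finset.Icc 1 n, {g (j:ℤ)} + {g ((n:ℤ)+1)}) := by abel

lemma shift_m {α : Type*} (g : ℤ → α) (n : ℕ) :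
    ({g 1} : Multiset α) + ∑ i ∈ Finset.Icc 1 n, {g ((i:ℤ) + 1)}
      = {g ((n:ℤ) + 1)} + ∑ i ∈ Finset.Icc 1 n, {g (i:ℤ)} := by
  induction n with
  | zero => simp
  | succ n ih =>
      rw [Finset.sum_Icc_succ_top (by omega), Finset.sum_Icc_succ_top (by omega)]
      push_cast
      calc ({g 1} : Multiset α) + (∑ i ∈ Finset.Icc 1 n, {g ((i:ℤ) + 1)} + {g ((n:ℤ)+1+1)})
          = ({g 1} + ∑ i ∈ Finset.Icc 1 n, {g ((i:ℤ) + 1)}) + {g ((n:ℤ)+1+1)} := by abel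
        _ = ({g ((n:ℤ)+1)} + ∑ i ∈ Finset.Icc 1 n, {g (i:ℤ)}) + {g ((n:ℤ)+1+1)} := by rw [ih]
        _ = {g ((n:ℤ)+1+1)} + (∑ i ∈ Finset.Icc 1 n, {g (i:ℤ)} + {g ((n:ℤ)+1)}) := by abel

lemma core_m (g : ℤ → ℤ → α) (lam : ℕ → ℕ) (hmono : ∀ i j : ℕ, i ≤ j → lam j ≤ lam i)
    (k : ℕ) (hk : 1 ≤ k) : ∀ n, k ≤ n →
    (∑ j ∈ Finset.Icc 1 (lam k), ({g (transposeFn n lam j) ((j:ℤ)-1)} : Multiset α))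
      + ∑ i ∈ Finset.Icc k n, ({g (i:ℤ) (lam i)} : Multiset α)
    = (∑ j ∈ Finset.Icc 1 (lam k), ({g (transposeFn n lam j) (j:ℤ)} : Multiset α))
      + {g (n:ℤ) 0} + ∑ i ∈ Finset.Icc (k+1) n, ({g ((i:ℤ)-1) (lam i)} : Multiset α) := by
  intro n hn
  induction n, hn using Nat.le_induction with
  | base =>
      have h1 : ∀ j ∈ Finset.Icc 1 (lam k), transposeFn k lam j = k := by
        intro j hj
        simp only [Finset.mem_Icc] at hj
        exact trans_max k lam hmono j hj.2 hk
      rw [Finset.sum_congr rfl (fun j hj => by rw [h1 j hj] :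
            ∀ j ∈ Finset.Icc 1 (lam k),
              ({g (transposeFn k lam j) ((j:ℤ)-1)} : Multiset α) = {g (k:ℤ) ((j:ℤ)-1)}),
          Finset.sum_congr rfl (fun j hj => by rw [h1 j hj] :
            ∀ j ∈ Finset.Icc 1 (lam k),
              ({g (transposeFn k lam j) (j:ℤ)} : Multiset α) = {g (k:ℤ) (j:ℤ)}),
          show Finset.Icc (k+1) k = ∅ from Finset.Icc_eq_empty (by omega),
          Finset.sum_empty, add_zero, Finset.Icc_self, Finset.sum_singleton]
      have := tele_m (fun b => g (k:ℤ) b) (lam k)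
      calc (∑ j ∈ Finset.Icc 1 (lam k), ({g (k:ℤ) ((j:ℤ)-1)} : Multiset α)) + {g (k:ℤ) (lam k)}
          = ({g (k:ℤ) ((lam k : ℕ):ℤ)} : Multiset α)
              + ∑ j ∈ Finset.Icc 1 (lam k), {g (k:ℤ) ((j:ℤ)-1)} := by abel
        _ = ({g (k:ℤ) 0} : Multiset α) + ∑ j ∈ Finset.Icc 1 (lam k), {g (k:ℤ) (j:ℤ)} := this
        _ = (∑ j ∈ Finset.Icc 1 (lam k), ({g (k:ℤ) (j:ℤ)} : Multiset α)) + {g (k:ℤ) 0} := by abel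
  | succ n hn ih =>
      have hrk : lam (n+1) ≤ lam k := hmono k (n+1) (by omega)
      set r := lam (n+1) with hrdef
      have e1 : ∀ j ∈ Finset.Icc 1 r, transposeFn (n+1) lam j = n + 1 := fun j hj => by
        simp only [Finset.mem_Icc] at hj
        exact trans_max (n+1) lam hmono j hj.2 (by omega)
      have e2 : ∀ j ∈ Finset.Icc (r+1) (lam k),
          transposeFn (n+1) lam j = transposeFn n lam j := by
        intro j hj
        simp only [Finset.mem_Icc] at hj
        rw [trans_succ, if_neg (by omega), add_zero]
      have e3 : ∀ j ∈ Finset.Icc 1 r, transposeFn n lam j = n := fun j hj => by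
        simp only [Finset.mem_Icc] at hj
        exact trans_max n lam hmono j (le_trans hj.2 (hmono n (n+1) (by omega))) (by omega)
      have hsplit1 :
          ∑ j ∈ Finset.Icc 1 (lam k), ({g (transposeFn (n+1) lam j) ((j:ℤ)-1)} : Multiset α)
            = (∑ j ∈ Finset.Icc 1 r, ({g ((n+1:ℕ):ℤ) ((j:ℤ)-1)} : Multiset α))
              + ∑ j ∈ Finset.Icc (r+1) (lam k),
                  ({g (transposeFn n lam j) ((j:ℤ)-1)} : Multiset α) := by
        rw [sumSplit _ r (lam k) hrk]
        congr 1
        · exact Finset.sum_congr rfl (fun j hj => by rw [e1 j hj])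
        · exact Finset.sum_congr rfl (fun j hj => by rw [e2 j hj])
      have hsplit2 :
          ∑ j ∈ Finset.Icc 1 (lam k), ({g (transposeFn (n+1) lam j) (j:ℤ)} : Multiset α)
            = (∑ j ∈ Finset.Icc 1 r, ({g ((n+1:ℕ):ℤ) (j:ℤ)} : Multiset α))
              + ∑ j ∈ Finset.Icc (r+1) (lam k),
                  ({g (transposeFn n lam j) (j:ℤ)} : Multiset α) := by
        rw [sumSplit _ r (lam k) hrk]
        congr 1
        · exact Finset.sum_congr rfl (fun j hj => by rw [e1 j hj])
        · exact Finset.sum_congr rfl (fun j hj => by rw [e2 j hj])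
      have hsplit1' :
          ∑ j ∈ Finset.Icc 1 (lam k), ({g (transposeFn n lam j) ((j:ℤ)-1)} : Multiset α)
            = (∑ j ∈ Finset.Icc 1 r, ({g (n:ℤ) ((j:ℤ)-1)} : Multiset α))
              + ∑ j ∈ Finset.Icc (r+1) (lam k),
                  ({g (transposeFn n lam j) ((j:ℤ)-1)} : Multiset α) := by
        rw [sumSplit _ r (lam k) hrk]
        congr 1
        exact Finset.sum_congr rfl (fun j hj => by rw [e3 j hj])
      have hsplit2' :
          ∑ j ∈ Finset.Icc 1 (lam k), ({g (transposeFn n lam j) (j:ℤ)} : Multiset α)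
            = (∑ j ∈ Finset.Icc 1 r, ({g (n:ℤ) (j:ℤ)} : Multiset α))
              + ∑ j ∈ Finset.Icc (r+1) (lam k),
                  ({g (transposeFn n lam j) (j:ℤ)} : Multiset α) := by
        rw [sumSplit _ r (lam k) hrk]
        congr 1
        exact Finset.sum_congr rfl (fun j hj => by rw [e3 j hj])
      rw [hsplit1', hsplit2'] at ih
      rw [hsplit1, hsplit2, Finset.sum_Icc_succ_top (show k ≤ n+1 by omega),
        Finset.sum_Icc_succ_top (show k+1 ≤ n+1 by omega),
        show ((n+1:ℕ):ℤ) - 1 = (n:ℤ) by push_cast; ring]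
      have t1 := tele_m (fun b => g (n:ℤ) b) r
      have t2 := tele_m (fun b => g ((n+1:ℕ):ℤ) b) r
      apply add_right_cancel (b := ({g (n:ℤ) (r:ℤ)} : Multiset α)
        + ∑ j ∈ Finset.Icc 1 r, ({g (n:ℤ) ((j:ℤ)-1)} : Multiset α))
      calc ((∑ j ∈ Finset.Icc 1 r, ({g ((n+1:ℕ):ℤ) ((j:ℤ)-1)} : Multiset α))
              + ∑ j ∈ Finset.Icc (r+1) (lam k),
                  ({g (transposeFn n lam j) ((j:ℤ)-1)} : Multiset α))
            + ((∑ i ∈ Finset.Icc k n, ({g (i:ℤ) (lam i)} : Multiset α))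
              + {g ((n+1:ℕ):ℤ) (r:ℤ)})
            + (({g (n:ℤ) (r:ℤ)} : Multiset α)
              + ∑ j ∈ Finset.Icc 1 r, ({g (n:ℤ) ((j:ℤ)-1)} : Multiset α))
          = (({g ((n+1:ℕ):ℤ) ((r:ℕ):ℤ)} : Multiset α)
              + ∑ j ∈ Finset.Icc 1 r, ({g ((n+1:ℕ):ℤ) ((j:ℤ)-1)} : Multiset α))
            + (((∑ j ∈ Finset.Icc 1 r, ({g (n:ℤ) ((j:ℤ)-1)} : Multiset α))
              + ∑ j ∈ Finset.Icc (r+1) (lam k),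
                  ({g (transposeFn n lam j) ((j:ℤ)-1)} : Multiset α))
              + ∑ i ∈ Finset.Icc k n, ({g (i:ℤ) (lam i)} : Multiset α))
            + {g (n:ℤ) (r:ℤ)} := by abel
        _ = (({g ((n+1:ℕ):ℤ) 0} : Multiset α)
              + ∑ j ∈ Finset.Icc 1 r, ({g ((n+1:ℕ):ℤ) (j:ℤ)} : Multiset α))
            + (((∑ j ∈ Finset.Icc 1 r, ({g (n:ℤ) (j:ℤ)} : Multiset α))
              + ∑ j ∈ Finset.Icc (r+1) (lam k),
                  ({g (transposeFn n lam j) (j:ℤ)} : Multiset α))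
              + {g (n:ℤ) 0}
              + ∑ i ∈ Finset.Icc (k+1) n, ({g ((i:ℤ)-1) (lam i)} : Multiset α))
            + {g (n:ℤ) (r:ℤ)} := by rw [t2, ih]
        _ = (((∑ j ∈ Finset.Icc 1 r, ({g ((n+1:ℕ):ℤ) (j:ℤ)} : Multiset α))
              + ∑ j ∈ Finset.Icc (r+1) (lam k),
                  ({g (transposeFn n lam j) (j:ℤ)} : Multiset α))
            + {g ((n+1:ℕ):ℤ) 0}
            + ((∑ i ∈ Finset.Icc (k+1) n, ({g ((i:ℤ)-1) (lam i)} : Multiset α))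
              + {g (n:ℤ) (r:ℤ)}))
            + (({g (n:ℤ) 0} : Multiset α)
              + ∑ j ∈ Finset.Icc 1 r, ({g (n:ℤ) (j:ℤ)} : Multiset α)) := by abel
        _ = (((∑ j ∈ Finset.Icc 1 r, ({g ((n+1:ℕ):ℤ) (j:ℤ)} : Multiset α))
              + ∑ j ∈ Finset.Icc (r+1) (lam k),
                  ({g (transposeFn n lam j) (j:ℤ)} : Multiset α))
            + {g ((n+1:ℕ):ℤ) 0}
            + ((∑ i ∈ Finset.Icc (k+1) n, ({g ((i:ℤ)-1) (lam i)} : Multiset α))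
              + {g (n:ℤ) (r:ℤ)}))
            + (({g (n:ℤ) (r:ℤ)} : Multiset α)
              + ∑ j ∈ Finset.Icc 1 r, ({g (n:ℤ) ((j:ℤ)-1)} : Multiset α)) := by rw [t1]

lemma sumSplitPred {M : Type*} [AddCommMonoid M] (f : ℕ → M) (k n : ℕ)
    (hk : 1 ≤ k) (hkn : k ≤ n) :
    ∑ i ∈ Finset.Icc 1 n, f i
      = ((∑ i ∈ Finset.Icc 1 (k-1), f i) + f k) + ∑ i ∈ Finset.Icc (k+1) n, f i := by
  rw [sumSplit f k n hkn]
  congr 1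
  obtain ⟨k', rfl⟩ : ∃ k', k = k' + 1 := ⟨k-1, by omega⟩
  simp only [Nat.add_sub_cancel]
  rw [Finset.sum_Icc_succ_top (by omega)]

lemma L3_m (lam : ℕ → ℕ) (hmono : ∀ i j : ℕ, i ≤ j → lam j ≤ lam i)
    (k n : ℕ) (hk : 1 ≤ k) (hkn : k ≤ n) (m : ℤ) :
    ∑ j ∈ Finset.Icc 1 (lam k), ({((transposeFn n lam j : ℤ) + 1 - k, (j:ℤ) - 1 - m)} : Multiset (ℤ × ℤ))
      + ({((0:ℤ), (lam k:ℤ) - m)} : Multiset (ℤ × ℤ))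
      + ∑ i ∈ Finset.Icc 1 (k-1), ({((i:ℤ) - k, (lam i:ℤ) - m)} : Multiset (ℤ × ℤ))
      + (∑ i ∈ Finset.Icc 1 n, ((∑ j ∈ Finset.Icc 1 (lam i), ({((i:ℤ) - k, (j:ℤ) - 1 - m)} : Multiset (ℤ × ℤ)))
          + (∑ j ∈ Finset.Icc 1 (lam i), ({((i:ℤ) + 1 - k, (j:ℤ) - m)} : Multiset (ℤ × ℤ)))))
    = ∑ j ∈ Finset.Icc 1 (lam k), ({((transposeFn n lam j : ℤ) + 1 - k, (j:ℤ) - m)} : Multiset (ℤ × ℤ))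
      + ∑ i ∈ Finset.Icc 1 (k-1), ({((i:ℤ) + 1 - k, (lam i:ℤ) - m)} : Multiset (ℤ × ℤ))
      + ({((1:ℤ) - k, -m)} : Multiset (ℤ × ℤ))
      + (∑ i ∈ Finset.Icc 1 n, ((∑ j ∈ Finset.Icc 1 (lam i), ({((i:ℤ) + 1 - k, (j:ℤ) - 1 - m)} : Multiset (ℤ × ℤ)))
          + (∑ j ∈ Finset.Icc 1 (lam i), ({((i:ℤ) - k, (j:ℤ) - m)} : Multiset (ℤ × ℤ))))) := by
  have E1 := core_m (fun a b => ((a + 1 - (k:ℤ), b - m) : ℤ × ℤ)) lam hmono k hk n hkn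
  rw [show ((0:ℤ) - m) = -m from zero_sub m] at E1
  rw [Finset.sum_congr rfl (fun i _ => by rw [show ((i:ℤ) - 1 + 1 - (k:ℤ)) = (i:ℤ) - k from by ring]
        : ∀ i ∈ Finset.Icc (k+1) n, ({(((i:ℤ) - 1 + 1 - (k:ℤ), (lam i:ℤ) - m))} : Multiset (ℤ × ℤ))
            = {((i:ℤ) - k, (lam i:ℤ) - m)})] at E1
  have E2 : ∑ i ∈ Finset.Icc 1 n, ({((i:ℤ) - k, (lam i:ℤ) - m)} : Multiset (ℤ × ℤ)) + (∑ i ∈ Finset.Icc 1 n, ∑ j ∈ Finset.Icc 1 (lam i), ({((i:ℤ) - k, (j:ℤ) - 1 - m)} : Multiset (ℤ × ℤ)))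
      = ∑ i ∈ Finset.Icc 1 n, ({((i:ℤ) - k, -m)} : Multiset (ℤ × ℤ)) + (∑ i ∈ Finset.Icc 1 n, ∑ j ∈ Finset.Icc 1 (lam i), ({((i:ℤ) - k, (j:ℤ) - m)} : Multiset (ℤ × ℤ))) := by
    rw [← Finset.sum_add_distrib, ← Finset.sum_add_distrib]
    refine Finset.sum_congr rfl (fun i _ => ?_)
    have := tele_m (fun b => (((i:ℤ) - k, b - m) : ℤ × ℤ)) (lam i)
    simpa only [zero_sub] using this
  have E3 : ∑ i ∈ Finset.Icc 1 n, ({((i:ℤ) + 1 - k, (lam i:ℤ) - m)} : Multiset (ℤ × ℤ)) + (∑ i ∈ Finset.Icc 1 n, ∑ j ∈ Finset.Icc 1 (lam i), ({((i:ℤ) + 1 - k, (j:ℤ) - 1 - m)} : Multiset (ℤ × ℤ)))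
      = ∑ i ∈ Finset.Icc 1 n, ({((i:ℤ) + 1 - k, -m)} : Multiset (ℤ × ℤ)) + (∑ i ∈ Finset.Icc 1 n, ∑ j ∈ Finset.Icc 1 (lam i), ({((i:ℤ) + 1 - k, (j:ℤ) - m)} : Multiset (ℤ × ℤ))) := by
    rw [← Finset.sum_add_distrib, ← Finset.sum_add_distrib]
    refine Finset.sum_congr rfl (fun i _ => ?_)
    have := tele_m (fun b => (((i:ℤ) + 1 - k, b - m) : ℤ × ℤ)) (lam i)
    simpa only [zero_sub] using this
  have E4 := shift_m (fun a => ((a - k, -m) : ℤ × ℤ)) n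
  have hU : ∑ i ∈ Finset.Icc 1 n, ({((i:ℤ) - k, (lam i:ℤ) - m)} : Multiset (ℤ × ℤ))
      = (∑ i ∈ Finset.Icc 1 (k-1), ({((i:ℤ) - k, (lam i:ℤ) - m)} : Multiset (ℤ × ℤ)) + ({((0:ℤ), (lam k:ℤ) - m)} : Multiset (ℤ × ℤ))) + ∑ i ∈ Finset.Icc (k+1) n, ({((i:ℤ) - k, (lam i:ℤ) - m)} : Multiset (ℤ × ℤ)) := by
    have h := sumSplitPred (fun i => ({((i:ℤ) - k, (lam i:ℤ) - m)} : Multiset (ℤ × ℤ))) k n hk hkn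
    rw [show ((k:ℤ) - (k:ℤ)) = (0:ℤ) from sub_self _] at h
    exact h
  have hV : ∑ i ∈ Finset.Icc 1 n, ({((i:ℤ) + 1 - k, (lam i:ℤ) - m)} : Multiset (ℤ × ℤ))
      = ∑ i ∈ Finset.Icc 1 (k-1), ({((i:ℤ) + 1 - k, (lam i:ℤ) - m)} : Multiset (ℤ × ℤ)) + ∑ i ∈ Finset.Icc k n, ({((i:ℤ) + 1 - k, (lam i:ℤ) - m)} : Multiset (ℤ × ℤ)) := by
    have h := sumSplit (fun i => ({((i:ℤ) + 1 - k, (lam i:ℤ) - m)} : Multiset (ℤ × ℤ))) (k-1) n (by omega)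
    rw [show k - 1 + 1 = k from by omega] at h
    exact h
  simp only [Finset.sum_add_distrib]
  apply add_right_cancel (b := ∑ i ∈ Finset.Icc k n, ({((i:ℤ) + 1 - k, (lam i:ℤ) - m)} : Multiset (ℤ × ℤ)) + ∑ i ∈ Finset.Icc 1 n, ({((i:ℤ) - k, (lam i:ℤ) - m)} : Multiset (ℤ × ℤ)) + ∑ i ∈ Finset.Icc 1 n, ({((i:ℤ) + 1 - k, -m)} : Multiset (ℤ × ℤ)))
  calc ∑ j ∈ Finset.Icc 1 (lam k), ({((transposeFn n lam j : ℤ) + 1 - k, (j:ℤ) - 1 - m)} : Multiset (ℤ × ℤ)) + ({((0:ℤ), (lam k:ℤ) - m)} : Multiset (ℤ × ℤ)) + ∑ i ∈ Finset.Icc 1 (k-1), ({((i:ℤ) - k, (lam i:ℤ) - m)} : Multiset (ℤ × ℤ)) + ((∑ i ∈ Finset.Icc 1 n, ∑ j ∈ Finset.Icc 1 (lam i), ({((i:ℤ) - k, (j:ℤ) - 1 - m)} : Multiset (ℤ × ℤ))) + (∑ i ∈ Finset.Icc 1 n, ∑ j ∈ Finset.Icc 1 (lam i), ({((i:ℤ)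 + 1 - k, (j:ℤ) - m)} : Multiset (ℤ × ℤ))))
        + (∑ i ∈ Finset.Icc k n, ({((i:ℤ) + 1 - k, (lam i:ℤ) - m)} : Multiset (ℤ × ℤ)) + ∑ i ∈ Finset.Icc 1 n, ({((i:ℤ) - k, (lam i:ℤ) - m)} : Multiset (ℤ × ℤ)) + ∑ i ∈ Finset.Icc 1 n, ({((i:ℤ) + 1 - k, -m)} : Multiset (ℤ × ℤ)))
      = ((∑ j ∈ Finset.Icc 1 (lam k), ({((transposeFn n lam j : ℤ) + 1 - k, (j:ℤ) - 1 - m)} : Multiset (ℤ × ℤ))) + (∑ i ∈ Finset.Icc k n, ({((i:ℤ) + 1 - k, (lam i:ℤ) - m)} : Multiset (ℤ × ℤ))))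
        + (({((0:ℤ), (lam k:ℤ) - m)} : Multiset (ℤ × ℤ)) + ∑ i ∈ Finset.Icc 1 (k-1), ({((i:ℤ) - k, (lam i:ℤ) - m)} : Multiset (ℤ × ℤ)) + (∑ i ∈ Finset.Icc 1 n, ∑ j ∈ Finset.Icc 1 (lam i), ({((i:ℤ) - k, (j:ℤ) - 1 - m)} : Multiset (ℤ × ℤ))) + (∑ i ∈ Finset.Icc 1 n, ∑ j ∈ Finset.Icc 1 (lam i), ({((i:ℤ) + 1 - k, (j:ℤ) - m)} : Multiset (ℤ × ℤ))) + (∑ i ∈ Finset.Icc 1 n, ({((i:ℤ) - k, (lam i:ℤ) - m)} : Multiset (ℤ × ℤ))) + (∑ i ∈ Finset.Icc 1 n, ({((i:ℤ) + 1 - k, -m)} : Multiset (ℤ × ℤ)))) := by abel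
    _ = ((∑ j ∈ Finset.Icc 1 (lam k), ({((transposeFn n lam j : ℤ) + 1 - k, (j:ℤ) - m)} : Multiset (ℤ × ℤ))) + (({((n:ℤ) + 1 - k, -m)} : Multiset (ℤ × ℤ))) + (∑ i ∈ Finset.Icc (k+1) n, ({((i:ℤ) - k, (lam i:ℤ) - m)} : Multiset (ℤ × ℤ))))
        + (({((0:ℤ), (lam k:ℤ) - m)} : Multiset (ℤ × ℤ)) + ∑ i ∈ Finset.Icc 1 (k-1), ({((i:ℤ) - k, (lam i:ℤ) - m)} : Multiset (ℤ × ℤ)) + (∑ i ∈ Finset.Icc 1 n, ∑ j ∈ Finset.Icc 1 (lam i), ({((i:ℤ) - k, (j:ℤ) - 1 - m)} : Multiset (ℤ × ℤ))) + (∑ i ∈ Finset.Icc 1 n, ∑ j ∈ Finset.Icc 1 (lam i), ({((i:ℤ) + 1 - k, (j:ℤ) - m)} : Multiset (ℤ × ℤ))) + (∑ i ∈ Finset.Icc 1 n, ({((i:ℤ) - k, (lam i:ℤ) - m)} : Multiset (ℤ × ℤ))) + (∑ i ∈ Finset.Icc 1 n, ({((i:ℤ) + 1 - k, -m)} : Multiset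 (ℤ × ℤ)))) := by rw [E1]
    _ = ((∑ i ∈ Finset.Icc 1 (k-1), ({((i:ℤ) - k, (lam i:ℤ) - m)} : Multiset (ℤ × ℤ)) + ({((0:ℤ), (lam k:ℤ) - m)} : Multiset (ℤ × ℤ))) + ∑ i ∈ Finset.Icc (k+1) n, ({((i:ℤ) - k, (lam i:ℤ) - m)} : Multiset (ℤ × ℤ)))
        + ((∑ j ∈ Finset.Icc 1 (lam k), ({((transposeFn n lam j : ℤ) + 1 - k, (j:ℤ) - m)} : Multiset (ℤ × ℤ))) + (({((n:ℤ) + 1 - k, -m)} : Multiset (ℤ × ℤ))) + (∑ i ∈ Finset.Icc 1 n, ∑ j ∈ Finset.Icc 1 (lam i), ({((i:ℤ) - k, (j:ℤ) - 1 - m)} : Multiset (ℤ × ℤ))) + (∑ i ∈ Finset.Icc 1 n, ∑ j ∈ Finset.Icc 1 (lam i), ({((i:ℤ) + 1 - k, (j:ℤ) - m)} : Multiset (ℤ × ℤ))) + (∑ i ∈ Finset.Icc 1 n, ({((i:ℤ) - k, (lam i:ℤ) - m)} : Multiset (ℤ × ℤ))) + (∑ i ∈ Finset.Icc 1 n, ({((i:ℤ)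 + 1 - k, -m)} : Multiset (ℤ × ℤ)))) := by abel
    _ = (∑ i ∈ Finset.Icc 1 n, ({((i:ℤ) - k, (lam i:ℤ) - m)} : Multiset (ℤ × ℤ)))
        + ((∑ j ∈ Finset.Icc 1 (lam k), ({((transposeFn n lam j : ℤ) + 1 - k, (j:ℤ) - m)} : Multiset (ℤ × ℤ))) + (({((n:ℤ) + 1 - k, -m)} : Multiset (ℤ × ℤ))) + (∑ i ∈ Finset.Icc 1 n, ∑ j ∈ Finset.Icc 1 (lam i), ({((i:ℤ) - k, (j:ℤ) - 1 - m)} : Multiset (ℤ × ℤ))) + (∑ i ∈ Finset.Icc 1 n, ∑ j ∈ Finset.Icc 1 (lam i), ({((i:ℤ) + 1 - k, (j:ℤ) - m)} : Multiset (ℤ × ℤ))) + (∑ i ∈ Finset.Icc 1 n, ({((i:ℤ) - k, (lam i:ℤ) - m)} : Multiset (ℤ × ℤ))) + (∑ i ∈ Finset.Icc 1 n, ({((i:ℤ) + 1 - k, -m)} : Multiset (ℤ × ℤ)))) := by rw [← hU]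
    _ = ((∑ i ∈ Finset.Icc 1 n, ({((i:ℤ) - k, (lam i:ℤ) - m)} : Multiset (ℤ × ℤ))) + (∑ i ∈ Finset.Icc 1 n, ∑ j ∈ Finset.Icc 1 (lam i), ({((i:ℤ) - k, (j:ℤ) - 1 - m)} : Multiset (ℤ × ℤ))))
        + ((∑ j ∈ Finset.Icc 1 (lam k), ({((transposeFn n lam j : ℤ) + 1 - k, (j:ℤ) - m)} : Multiset (ℤ × ℤ))) + (({((n:ℤ) + 1 - k, -m)} : Multiset (ℤ × ℤ))) + (∑ i ∈ Finset.Icc 1 n, ∑ j ∈ Finset.Icc 1 (lam i), ({((i:ℤ) + 1 - k, (j:ℤ) - m)} : Multiset (ℤ × ℤ))) + (∑ i ∈ Finset.Icc 1 n, ({((i:ℤ) - k, (lam i:ℤ) - m)} : Multiset (ℤ × ℤ))) + (∑ i ∈ Finset.Icc 1 n, ({((i:ℤ) + 1 - k, -m)} : Multiset (ℤ × ℤ)))) := by abel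
    _ = ((∑ i ∈ Finset.Icc 1 n, ({((i:ℤ) - k, -m)} : Multiset (ℤ × ℤ))) + (∑ i ∈ Finset.Icc 1 n, ∑ j ∈ Finset.Icc 1 (lam i), ({((i:ℤ) - k, (j:ℤ) - m)} : Multiset (ℤ × ℤ))))
        + ((∑ j ∈ Finset.Icc 1 (lam k), ({((transposeFn n lam j : ℤ) + 1 - k, (j:ℤ) - m)} : Multiset (ℤ × ℤ))) + (({((n:ℤ) + 1 - k, -m)} : Multiset (ℤ × ℤ))) + (∑ i ∈ Finset.Icc 1 n, ∑ j ∈ Finset.Icc 1 (lam i), ({((i:ℤ) + 1 - k, (j:ℤ) - m)} : Multiset (ℤ × ℤ))) + (∑ i ∈ Finset.Icc 1 n, ({((i:ℤ) - k, (lam i:ℤ) - m)} : Multiset (ℤ × ℤ))) + (∑ i ∈ Finset.Icc 1 n, ({((i:ℤ) + 1 - k, -m)} : Multiset (ℤ × ℤ)))) := by rw [E2]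
    _ = ((∑ i ∈ Finset.Icc 1 n, ({((i:ℤ) + 1 - k, -m)} : Multiset (ℤ × ℤ))) + (∑ i ∈ Finset.Icc 1 n, ∑ j ∈ Finset.Icc 1 (lam i), ({((i:ℤ) + 1 - k, (j:ℤ) - m)} : Multiset (ℤ × ℤ))))
        + ((∑ j ∈ Finset.Icc 1 (lam k), ({((transposeFn n lam j : ℤ) + 1 - k, (j:ℤ) - m)} : Multiset (ℤ × ℤ))) + (({((n:ℤ) + 1 - k, -m)} : Multiset (ℤ × ℤ))) + (∑ i ∈ Finset.Icc 1 n, ∑ j ∈ Finset.Icc 1 (lam i), ({((i:ℤ) - k, (j:ℤ) - m)} : Multiset (ℤ × ℤ))) + (∑ i ∈ Finset.Icc 1 n, ({((i:ℤ) - k, (lam i:ℤ) - m)} : Multiset (ℤ × ℤ))) + (∑ i ∈ Finset.Icc 1 n, ({((i:ℤ) - k, -m)} : Multiset (ℤ × ℤ)))) := by abel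
    _ = ((∑ i ∈ Finset.Icc 1 n, ({((i:ℤ) + 1 - k, (lam i:ℤ) - m)} : Multiset (ℤ × ℤ))) + (∑ i ∈ Finset.Icc 1 n, ∑ j ∈ Finset.Icc 1 (lam i), ({((i:ℤ) + 1 - k, (j:ℤ) - 1 - m)} : Multiset (ℤ × ℤ))))
        + ((∑ j ∈ Finset.Icc 1 (lam k), ({((transposeFn n lam j : ℤ) + 1 - k, (j:ℤ) - m)} : Multiset (ℤ × ℤ))) + (({((n:ℤ) + 1 - k, -m)} : Multiset (ℤ × ℤ))) + (∑ i ∈ Finset.Icc 1 n, ∑ j ∈ Finset.Icc 1 (lam i), ({((i:ℤ) - k, (j:ℤ) - m)} : Multiset (ℤ × ℤ))) + (∑ i ∈ Finset.Icc 1 n, ({((i:ℤ) - k, (lam i:ℤ) - m)} : Multiset (ℤ × ℤ))) + (∑ i ∈ Finset.Icc 1 n, ({((i:ℤ) - k, -m)} : Multiset (ℤ × ℤ)))) := by rw [← E3]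
    _ = ((({((n:ℤ) + 1 - k, -m)} : Multiset (ℤ × ℤ))) + (∑ i ∈ Finset.Icc 1 n, ({((i:ℤ) - k, -m)} : Multiset (ℤ × ℤ))))
        + ((∑ i ∈ Finset.Icc 1 n, ({((i:ℤ) + 1 - k, (lam i:ℤ) - m)} : Multiset (ℤ × ℤ))) + (∑ i ∈ Finset.Icc 1 n, ∑ j ∈ Finset.Icc 1 (lam i), ({((i:ℤ) + 1 - k, (j:ℤ) - 1 - m)} : Multiset (ℤ × ℤ))) + (∑ j ∈ Finset.Icc 1 (lam k), ({((transposeFn n lam j : ℤ) + 1 - k, (j:ℤ) - m)} : Multiset (ℤ × ℤ))) + (∑ i ∈ Finset.Icc 1 n, ∑ j ∈ Finset.Icc 1 (lam i), ({((i:ℤ) - k, (j:ℤ) - m)} : Multiset (ℤ × ℤ))) + (∑ i ∈ Finset.Icc 1 n, ({((i:ℤ) - k, (lam i:ℤ) - m)} : Multiset (ℤ × ℤ)))) := by abel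
    _ = ((({((1:ℤ) - k, -m)} : Multiset (ℤ × ℤ))) + (∑ i ∈ Finset.Icc 1 n, ({((i:ℤ) + 1 - k, -m)} : Multiset (ℤ × ℤ))))
        + ((∑ i ∈ Finset.Icc 1 n, ({((i:ℤ) + 1 - k, (lam i:ℤ) - m)} : Multiset (ℤ × ℤ))) + (∑ i ∈ Finset.Icc 1 n, ∑ j ∈ Finset.Icc 1 (lam i), ({((i:ℤ) + 1 - k, (j:ℤ) - 1 - m)} : Multiset (ℤ × ℤ))) + (∑ j ∈ Finset.Icc 1 (lam k), ({((transposeFn n lam j : ℤ) + 1 - k, (j:ℤ) - m)} : Multiset (ℤ × ℤ))) + (∑ i ∈ Finset.Icc 1 n, ∑ j ∈ Finset.Icc 1 (lam i), ({((i:ℤ) - k, (j:ℤ) - m)} : Multiset (ℤ × ℤ))) + (∑ i ∈ Finset.Icc 1 n, ({((i:ℤ) - k, (lam i:ℤ) - m)} : Multiset (ℤ × ℤ)))) := by rw [← E4]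
    _ = (∑ i ∈ Finset.Icc 1 n, ({((i:ℤ) + 1 - k, (lam i:ℤ) - m)} : Multiset (ℤ × ℤ)))
        + ((({((1:ℤ) - k, -m)} : Multiset (ℤ × ℤ))) + (∑ i ∈ Finset.Icc 1 n, ({((i:ℤ) + 1 - k, -m)} : Multiset (ℤ × ℤ))) + (∑ i ∈ Finset.Icc 1 n, ∑ j ∈ Finset.Icc 1 (lam i), ({((i:ℤ) + 1 - k, (j:ℤ) - 1 - m)} : Multiset (ℤ × ℤ))) + (∑ j ∈ Finset.Icc 1 (lam k), ({((transposeFn n lam j : ℤ) + 1 - k, (j:ℤ) - m)} : Multiset (ℤ × ℤ))) + (∑ i ∈ Finset.Icc 1 n, ∑ j ∈ Finset.Icc 1 (lam i), ({((i:ℤ) - k, (j:ℤ) - m)} : Multiset (ℤ × ℤ))) + (∑ i ∈ Finset.Icc 1 n, ({((i:ℤ) - k, (lam i:ℤ) - m)} : Multiset (ℤ × ℤ)))) := by abel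
    _ = (∑ i ∈ Finset.Icc 1 (k-1), ({((i:ℤ) + 1 - k, (lam i:ℤ) - m)} : Multiset (ℤ × ℤ)) + ∑ i ∈ Finset.Icc k n, ({((i:ℤ) + 1 - k, (lam i:ℤ) - m)} : Multiset (ℤ × ℤ)))
        + ((({((1:ℤ) - k, -m)} : Multiset (ℤ × ℤ))) + (∑ i ∈ Finset.Icc 1 n, ({((i:ℤ) + 1 - k, -m)} : Multiset (ℤ × ℤ))) + (∑ i ∈ Finset.Icc 1 n, ∑ j ∈ Finset.Icc 1 (lam i), ({((i:ℤ) + 1 - k, (j:ℤ) - 1 - m)} : Multiset (ℤ × ℤ))) + (∑ j ∈ Finset.Icc 1 (lam k), ({((transposeFn n lam j : ℤ) + 1 - k, (j:ℤ) - m)} : Multiset (ℤ × ℤ))) + (∑ i ∈ Finset.Icc 1 n, ∑ j ∈ Finset.Icc 1 (lam i), ({((i:ℤ) - k, (j:ℤ) - m)} : Multiset (ℤ × ℤ))) + (∑ i ∈ Finset.Icc 1 n, ({((i:ℤ) - k, (lam i:ℤ) - m)} : Multiset (ℤ × ℤ)))) := by rw [hV]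
    _ = ∑ j ∈ Finset.Icc 1 (lam k), ({((transposeFn n lam j : ℤ) + 1 - k, (j:ℤ) - m)} : Multiset (ℤ × ℤ)) + ∑ i ∈ Finset.Icc 1 (k-1), ({((i:ℤ) + 1 - k, (lam i:ℤ) - m)} : Multiset (ℤ × ℤ)) + ({((1:ℤ) - k, -m)} : Multiset (ℤ × ℤ)) + ((∑ i ∈ Finset.Icc 1 n, ∑ j ∈ Finset.Icc 1 (lam i), ({((i:ℤ) + 1 - k, (j:ℤ) - 1 - m)} : Multiset (ℤ × ℤ))) + (∑ i ∈ Finset.Icc 1 n, ∑ j ∈ Finset.Icc 1 (lam i), ({((i:ℤ) - k, (j:ℤ) - m)} : Multiset (ℤ × ℤ))))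
        + (∑ i ∈ Finset.Icc k n, ({((i:ℤ) + 1 - k, (lam i:ℤ) - m)} : Multiset (ℤ × ℤ)) + ∑ i ∈ Finset.Icc 1 n, ({((i:ℤ) - k, (lam i:ℤ) - m)} : Multiset (ℤ × ℤ)) + ∑ i ∈ Finset.Icc 1 n, ({((i:ℤ) + 1 - k, -m)} : Multiset (ℤ × ℤ))) := by abel

noncomputable def mp (F : ℤ × ℤ → ℂ) (M : Multiset (ℤ × ℤ)) : ℂ := (M.map F).prod

lemma mp_add (F : ℤ × ℤ → ℂ) (M N : Multiset (ℤ × ℤ)) :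
    mp F (M + N) = mp F M * mp F N := by
  simp [mp]

lemma mp_single (F : ℤ × ℤ → ℂ) (x : ℤ × ℤ) : mp F {x} = F x := by
  simp [mp]

lemma mp_sum (F : ℤ × ℤ → ℂ) {β : Type*} (s : Finset β) (f : β → Multiset (ℤ × ℤ)) :
    mp F (∑ x ∈ s, f x) = ∏ x ∈ s, mp F (f x) := by
  classical
  induction s using Finset.induction with
  | empty => simp [mp]
  | insert _ _ hx ih =>
      rw [Finset.sum_insert hx, Finset.prod_insert hx, mp_add, ih]

lemma L3_c (F : ℤ → ℤ → ℂ) (lam : ℕ → ℕ) (hmono : ∀ i j : ℕ, i ≤ j → lam j ≤ lam i)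
    (n : ℕ) (hsupp : ∀ i : ℕ, n < i → lam i = 0) (k : ℕ) (hk : 1 ≤ k) (m : ℤ) :
    (∏ j ∈ Finset.Icc 1 (lam k), F ((transposeFn n lam j : ℤ) + 1 - k) ((j:ℤ) - 1 - m))
      * F 0 ((lam k : ℤ) - m)
      * (∏ i ∈ Finset.Icc 1 (k-1), F ((i:ℤ) - k) ((lam i : ℤ) - m))
      * (∏ i ∈ Finset.Icc 1 n, ∏ j ∈ Finset.Icc 1 (lam i),
          F ((i:ℤ) - k) ((j:ℤ) - 1 - m) * F ((i:ℤ) + 1 - k) ((j:ℤ) - m))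
    = (∏ j ∈ Finset.Icc 1 (lam k), F ((transposeFn n lam j : ℤ) + 1 - k) ((j:ℤ) - m))
      * (∏ i ∈ Finset.Icc 1 (k-1), F ((i:ℤ) + 1 - k) ((lam i : ℤ) - m))
      * F (1 - k) (-m)
      * (∏ i ∈ Finset.Icc 1 n, ∏ j ∈ Finset.Icc 1 (lam i),
          F ((i:ℤ) + 1 - k) ((j:ℤ) - 1 - m) * F ((i:ℤ) - k) ((j:ℤ) - m)) := by
  -- enlarge n to N := max n k
  set N := max n k with hN
  have hnN : n ≤ N := le_max_left n k
  have hkN : k ≤ N := le_max_right n k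
  have htr : ∀ j ∈ Finset.Icc 1 (lam k), transposeFn n lam j = transposeFn N lam j := by
    intro j hj
    simp only [Finset.mem_Icc] at hj
    exact (trans_stable n N hnN lam hsupp j hj.1).symm
  have hdp : ∀ (G : ℕ → ℕ → ℂ),
      (∏ i ∈ Finset.Icc 1 n, ∏ j ∈ Finset.Icc 1 (lam i), G i j)
        = ∏ i ∈ Finset.Icc 1 N, ∏ j ∈ Finset.Icc 1 (lam i), G i j := by
    intro G
    refine Finset.prod_subset (Finset.Icc_subset_Icc_right hnN) ?_
    intro i hi hni
    simp only [Finset.mem_Icc] at hi hni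
    rw [hsupp i (by omega)]
    simp
  have hx1 : (∏ j ∈ Finset.Icc 1 (lam k),
        F ((transposeFn n lam j : ℤ) + 1 - k) ((j:ℤ) - 1 - m))
      = ∏ j ∈ Finset.Icc 1 (lam k),
          F ((transposeFn N lam j : ℤ) + 1 - k) ((j:ℤ) - 1 - m) :=
    Finset.prod_congr rfl (fun j hj => by rw [htr j hj])
  have hx2 : (∏ j ∈ Finset.Icc 1 (lam k),
        F ((transposeFn n lam j : ℤ) + 1 - k) ((j:ℤ) - m))
      = ∏ j ∈ Finset.Icc 1 (lam k),
          F ((transposeFn N lam j : ℤ) + 1 - k) ((j:ℤ) - m) :=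
    Finset.prod_congr rfl (fun j hj => by rw [htr j hj])
  rw [hx1, hx2, hdp, hdp]
  have key := L3_m lam hmono k N hk hkN m
  have := congrArg (mp (fun p => F p.1 p.2)) key
  simp only [mp_add, mp_sum, mp_single] at this
  simp only [Finset.prod_mul_distrib] at this ⊢
  linear_combination this

noncomputable def Ffn (Q q1 q2 : ℂ) (a b : ℤ) : ℂ := 1 - Q * q1 ^ a * q2 ^ b

lemma Ffn_congr {Q q1 q2 : ℂ} {a b a' b' : ℤ} (ha : a = a') (hb : b = b') :
    Ffn Q q1 q2 a b = Ffn Q q1 q2 a' b' := by rw [ha, hb]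

lemma nek_eq (Q q1 q2 : ℂ) (Nl NN : ℕ) (lam ν : ℕ → ℕ) :
    nek Q q1 q2 Nl NN lam ν
      = (∏ i ∈ Finset.Icc 1 Nl, ∏ j ∈ Finset.Icc 1 (lam i),
          Ffn Q q1 q2 ((transposeFn Nl lam j : ℤ) - i + 1) ((j:ℤ) - ν i))
        * ∏ i ∈ Finset.Icc 1 NN, ∏ j ∈ Finset.Icc 1 (ν i),
            Ffn Q q1 q2 ((i:ℤ) - transposeFn NN ν j) ((lam i:ℤ) - j + 1) := by
  unfold nek Ffn
  congr 1 <;>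
    exact Finset.prod_congr rfl fun i _ => Finset.prod_congr rfl fun j _ => by ring

lemma trans_update (N k : ℕ) (hk1 : 1 ≤ k) (hkN : k ≤ N) (f f' : ℕ → ℕ)
    (hf' : ∀ i, f' i = if i = k then f i + 1 else f i) (j : ℕ) :
    transposeFn N f' j = transposeFn N f j + (if j = f k + 1 then 1 else 0) := by
  unfold transposeFn
  have hkmem : k ∈ Finset.Icc 1 N := by simp only [Finset.mem_Icc]; omega
  have hE : Finset.Icc 1 N = insert k ((Finset.Icc 1 N).erase k) :=
    (Finset.insert_erase hkmem).symm
  have hfilter_eq : ((Finset.Icc 1 N).erase k).filter (fun i => j ≤ f' i)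
      = ((Finset.Icc 1 N).erase k).filter (fun i => j ≤ f i) := by
    apply Finset.filter_congr
    intro i hi
    rw [hf' i, if_neg (Finset.ne_of_mem_erase hi)]
  rw [hE, Finset.filter_insert, Finset.filter_insert, hfilter_eq]
  set E := ((Finset.Icc 1 N).erase k).filter (fun i => j ≤ f i) with hEdef
  have hkE : k ∉ E := fun h => Finset.notMem_erase k _ (Finset.mem_of_mem_filter _ h)
  rw [hf' k, if_pos rfl]
  by_cases h1 : j ≤ f k
  · rw [if_pos (by omega), if_pos h1, if_neg (by omega),
      Finset.card_insert_of_notMem hkE]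
  · by_cases h2 : j = f k + 1
    · rw [if_pos (by omega), if_neg h1, if_pos h2, Finset.card_insert_of_notMem hkE]
    · rw [if_neg (by omega), if_neg h1, if_neg h2, add_zero]

lemma trans_at_c (Nn k : ℕ) (nu : ℕ → ℕ) (hnu : ∀ i j : ℕ, i ≤ j → nu j ≤ nu i)
    (hk1 : 1 ≤ k) (hk2 : k ≤ Nn + 1) (haddable : k = 1 ∨ nu k < nu (k - 1)) :
    transposeFn (Nn+1) nu (nu k + 1) = k - 1 := by
  unfold transposeFn
  have hfil : (Finset.Icc 1 (Nn+1)).filter (fun i => nu k + 1 ≤ nu i)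
      = Finset.Icc 1 (k-1) := by
    ext i
    simp only [Finset.mem_filter, Finset.mem_Icc]
    constructor
    · rintro ⟨⟨h1, h2⟩, h3⟩
      refine ⟨h1, ?_⟩
      by_contra hc
      have := hnu k i (by omega)
      omega
    · rintro ⟨h1, h2⟩
      rcases haddable with h | h
      · omega
      · have h3 : nu (k-1) ≤ nu i := hnu i (k-1) h2
        exact ⟨⟨h1, by omega⟩, by omega⟩
  rw [hfil, Nat.card_Icc]
  omega

lemma L1 (Q q1 q2 : ℂ) (Nl : ℕ) (lam : ℕ → ℕ) (hNl : ∀ i : ℕ, Nl < i → lam i = 0)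
    (k : ℕ) (hk1 : 1 ≤ k) (nu nu' : ℕ → ℕ)
    (hnu' : ∀ i : ℕ, nu' i = if i = k then nu i + 1 else nu i) :
    (∏ i ∈ Finset.Icc 1 Nl, ∏ j ∈ Finset.Icc 1 (lam i),
        Ffn Q q1 q2 ((transposeFn Nl lam j : ℤ) - i + 1) ((j:ℤ) - nu' i))
      * ∏ j ∈ Finset.Icc 1 (lam k),
          Ffn Q q1 q2 ((transposeFn Nl lam j : ℤ) + 1 - k) ((j:ℤ) - (nu k : ℤ))
    = (∏ i ∈ Finset.Icc 1 Nl, ∏ j ∈ Finset.Icc 1 (lam i),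
        Ffn Q q1 q2 ((transposeFn Nl lam j : ℤ) - i + 1) ((j:ℤ) - nu i))
      * ∏ j ∈ Finset.Icc 1 (lam k),
          Ffn Q q1 q2 ((transposeFn Nl lam j : ℤ) + 1 - k) ((j:ℤ) - 1 - (nu k : ℤ)) := by
  by_cases hkN : k ≤ Nl
  · have hmem : k ∈ Finset.Icc 1 Nl := by simp only [Finset.mem_Icc]; omega
    rw [← Finset.mul_prod_erase _ _ hmem, ← Finset.mul_prod_erase _ _ hmem]
    have he : (∏ i ∈ (Finset.Icc 1 Nl).erase k, ∏ j ∈ Finset.Icc 1 (lam i),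
          Ffn Q q1 q2 ((transposeFn Nl lam j : ℤ) - i + 1) ((j:ℤ) - nu' i))
        = ∏ i ∈ (Finset.Icc 1 Nl).erase k, ∏ j ∈ Finset.Icc 1 (lam i),
            Ffn Q q1 q2 ((transposeFn Nl lam j : ℤ) - i + 1) ((j:ℤ) - nu i) :=
      Finset.prod_congr rfl fun i hi => Finset.prod_congr rfl fun j _ => by
        rw [hnu' i, if_neg (Finset.ne_of_mem_erase hi)]
    rw [he]
    have hrow' : (∏ j ∈ Finset.Icc 1 (lam k),
          Ffn Q q1 q2 ((transposeFn Nl lam j : ℤ) - k + 1) ((j:ℤ) - nu' k))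
        = ∏ j ∈ Finset.Icc 1 (lam k),
            Ffn Q q1 q2 ((transposeFn Nl lam j : ℤ) + 1 - k) ((j:ℤ) - 1 - (nu k : ℤ)) :=
      Finset.prod_congr rfl fun j _ =>
        Ffn_congr (by ring) (by rw [hnu' k, if_pos rfl]; push_cast; ring)
    have hrow : (∏ j ∈ Finset.Icc 1 (lam k),
          Ffn Q q1 q2 ((transposeFn Nl lam j : ℤ) - k + 1) ((j:ℤ) - nu k))
        = ∏ j ∈ Finset.Icc 1 (lam k),
            Ffn Q q1 q2 ((transposeFn Nl lam j : ℤ) + 1 - k) ((j:ℤ) - (nu k : ℤ)) :=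
      Finset.prod_congr rfl fun j _ => Ffn_congr (by ring) rfl
    rw [hrow', hrow]
    ring
  · have h0 : lam k = 0 := hNl k (by omega)
    rw [h0, show Finset.Icc 1 0 = ∅ from Finset.Icc_eq_empty (by omega),
      Finset.prod_empty, Finset.prod_empty, mul_one, mul_one]
    exact Finset.prod_congr rfl fun i hi => Finset.prod_congr rfl fun j _ => by
      simp only [Finset.mem_Icc] at hi
      rw [hnu' i, if_neg (by omega)]

@[to_additive existing sumSplitPred]
lemma prodSplitPred {M : Type*} [CommMonoid M] (f : ℕ → M) (k n : ℕ)
    (hk : 1 ≤ k) (hkn : k ≤ n) :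
    ∏ i ∈ Finset.Icc 1 n, f i
      = ((∏ i ∈ Finset.Icc 1 (k-1), f i) * f k) * ∏ i ∈ Finset.Icc (k+1) n, f i := by
  rw [prodSplit f k n hkn]
  congr 1
  obtain ⟨k', rfl⟩ : ∃ k', k = k' + 1 := ⟨k-1, by omega⟩
  simp only [Nat.add_sub_cancel]
  rw [Finset.prod_Icc_succ_top (by omega)]

lemma L2 (Q q1 q2 : ℂ) (Nn : ℕ) (lam nu : ℕ → ℕ)
    (hnu : ∀ i j : ℕ, i ≤ j → nu j ≤ nu i) (hNn : ∀ i : ℕ, Nn < i → nu i = 0)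
    (k : ℕ) (hk1 : 1 ≤ k) (hk2 : k ≤ Nn + 1)
    (haddable : k = 1 ∨ nu k < nu (k-1))
    (nu' : ℕ → ℕ) (hnu' : ∀ i : ℕ, nu' i = if i = k then nu i + 1 else nu i) :
    (∏ i ∈ Finset.Icc 1 (Nn+1), ∏ j ∈ Finset.Icc 1 (nu' i),
        Ffn Q q1 q2 ((i:ℤ) - transposeFn (Nn+1) nu' j) ((lam i:ℤ) - j + 1))
      * ∏ i ∈ Finset.Icc 1 (k-1), Ffn Q q1 q2 ((i:ℤ) + 1 - k) ((lam i:ℤ) - (nu k:ℤ))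
    = (∏ i ∈ Finset.Icc 1 Nn, ∏ j ∈ Finset.Icc 1 (nu i),
        Ffn Q q1 q2 ((i:ℤ) - transposeFn Nn nu j) ((lam i:ℤ) - j + 1))
      * (Ffn Q q1 q2 0 ((lam k:ℤ) - (nu k:ℤ))
        * ∏ i ∈ Finset.Icc 1 (k-1), Ffn Q q1 q2 ((i:ℤ) - k) ((lam i:ℤ) - (nu k:ℤ))) := by
  have haddable' : ∀ i : ℕ, 1 ≤ i → i ≤ k - 1 → nu k + 1 ≤ nu i := by
    intro i h1 h2
    rcases haddable with h | h
    · omega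
    · have := hnu i (k-1) h2; omega
  have hT' : ∀ j : ℕ, transposeFn (Nn+1) nu' j
      = transposeFn (Nn+1) nu j + (if j = nu k + 1 then 1 else 0) :=
    trans_update (Nn+1) k hk1 (by omega) nu nu' hnu'
  have htc : transposeFn (Nn+1) nu (nu k + 1) = k - 1 :=
    trans_at_c Nn k nu hnu hk1 hk2 haddable
  have hP2 : (∏ i ∈ Finset.Icc 1 Nn, ∏ j ∈ Finset.Icc 1 (nu i),
        Ffn Q q1 q2 ((i:ℤ) - transposeFn Nn nu j) ((lam i:ℤ) - j + 1))
      = ∏ i ∈ Finset.Icc 1 (Nn+1), ∏ j ∈ Finset.Icc 1 (nu i),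
          Ffn Q q1 q2 ((i:ℤ) - transposeFn (Nn+1) nu j) ((lam i:ℤ) - j + 1) := by
    symm
    rw [Finset.prod_Icc_succ_top (show 1 ≤ Nn + 1 by omega), hNn (Nn+1) (by omega),
      show Finset.Icc 1 0 = ∅ from Finset.Icc_eq_empty (by omega), Finset.prod_empty, mul_one]
    exact Finset.prod_congr rfl fun i hi => Finset.prod_congr rfl fun j hj => by
      simp only [Finset.mem_Icc] at hj
      rw [trans_stable Nn (Nn+1) (by omega) nu hNn j hj.1]
  have hx : (∏ i ∈ Finset.Icc 1 (Nn+1),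
        (if i ≤ k - 1 then Ffn Q q1 q2 ((i:ℤ) + 1 - k) ((lam i:ℤ) - (nu k:ℤ)) else 1))
      = ∏ i ∈ Finset.Icc 1 (k-1), Ffn Q q1 q2 ((i:ℤ) + 1 - k) ((lam i:ℤ) - (nu k:ℤ)) := by
    rw [← Finset.prod_subset (Finset.Icc_subset_Icc_right (show k-1 ≤ Nn+1 by omega))
      (fun i hi hni => by
        simp only [Finset.mem_Icc] at hi hni
        exact if_neg (by omega))]
    exact Finset.prod_congr rfl fun i hi => by
      simp only [Finset.mem_Icc] at hi
      exact if_pos (by omega)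
  have hy : (∏ i ∈ Finset.Icc 1 (Nn+1),
        (if i ≤ k - 1 then Ffn Q q1 q2 ((i:ℤ) - k) ((lam i:ℤ) - (nu k:ℤ))
          else if i = k then Ffn Q q1 q2 0 ((lam k:ℤ) - (nu k:ℤ)) else 1))
      = Ffn Q q1 q2 0 ((lam k:ℤ) - (nu k:ℤ))
        * ∏ i ∈ Finset.Icc 1 (k-1), Ffn Q q1 q2 ((i:ℤ) - k) ((lam i:ℤ) - (nu k:ℤ)) := by
    rw [prodSplitPred _ k (Nn+1) hk1 (by omega)]
    have h1 : (∏ i ∈ Finset.Icc 1 (k-1),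
          (if i ≤ k - 1 then Ffn Q q1 q2 ((i:ℤ) - k) ((lam i:ℤ) - (nu k:ℤ))
            else if i = k then Ffn Q q1 q2 0 ((lam k:ℤ) - (nu k:ℤ)) else 1))
        = ∏ i ∈ Finset.Icc 1 (k-1), Ffn Q q1 q2 ((i:ℤ) - k) ((lam i:ℤ) - (nu k:ℤ)) :=
      Finset.prod_congr rfl fun i hi => by
        simp only [Finset.mem_Icc] at hi
        exact if_pos (by omega)
    have h2 : (∏ i ∈ Finset.Icc (k+1) (Nn+1),
          (if i ≤ k - 1 then Ffn Q q1 q2 ((i:ℤ) - k) ((lam i:ℤ) - (nu k:ℤ))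
            else if i = k then Ffn Q q1 q2 0 ((lam k:ℤ) - (nu k:ℤ)) else 1))
        = 1 :=
      Finset.prod_eq_one fun i hi => by
        simp only [Finset.mem_Icc] at hi
        rw [if_neg (by omega), if_neg (by omega)]
    rw [h1, h2, if_neg (by omega), if_pos rfl, mul_one]
    ring
  have hrow : ∀ i ∈ Finset.Icc 1 (Nn+1),
      (∏ j ∈ Finset.Icc 1 (nu' i),
          Ffn Q q1 q2 ((i:ℤ) - transposeFn (Nn+1) nu' j) ((lam i:ℤ) - j + 1))
        * (if i ≤ k - 1 then Ffn Q q1 q2 ((i:ℤ) + 1 - k) ((lam i:ℤ) - (nu k:ℤ)) else 1)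
      = (∏ j ∈ Finset.Icc 1 (nu i),
          Ffn Q q1 q2 ((i:ℤ) - transposeFn (Nn+1) nu j) ((lam i:ℤ) - j + 1))
        * (if i ≤ k - 1 then Ffn Q q1 q2 ((i:ℤ) - k) ((lam i:ℤ) - (nu k:ℤ))
            else if i = k then Ffn Q q1 q2 0 ((lam k:ℤ) - (nu k:ℤ)) else 1) := by
    intro i hi
    simp only [Finset.mem_Icc] at hi
    rcases Nat.lt_trichotomy i k with hik | hik | hik
    · -- i < k
      have hii : i ≤ k - 1 := by omega
      rw [if_pos hii, if_pos hii]
      have hnui : nu' i = nu i := by rw [hnu' i, if_neg (by omega)]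
      rw [hnui]
      have hcmem : nu k + 1 ∈ Finset.Icc 1 (nu i) := by
        simp only [Finset.mem_Icc]
        exact ⟨by omega, haddable' i (by omega) hii⟩
      rw [← Finset.mul_prod_erase _ _ hcmem, ← Finset.mul_prod_erase _ _ hcmem]
      have herase : (∏ j ∈ (Finset.Icc 1 (nu i)).erase (nu k + 1),
            Ffn Q q1 q2 ((i:ℤ) - transposeFn (Nn+1) nu' j) ((lam i:ℤ) - j + 1))
          = ∏ j ∈ (Finset.Icc 1 (nu i)).erase (nu k + 1),
              Ffn Q q1 q2 ((i:ℤ) - transposeFn (Nn+1) nu j) ((lam i:ℤ) - j + 1) :=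
        Finset.prod_congr rfl fun j hj => by
          rw [hT' j, if_neg (Finset.ne_of_mem_erase hj), add_zero]
      rw [herase]
      have hhead' : Ffn Q q1 q2 ((i:ℤ) - transposeFn (Nn+1) nu' (nu k + 1))
            ((lam i:ℤ) - (nu k + 1 : ℕ) + 1)
          = Ffn Q q1 q2 ((i:ℤ) - k) ((lam i:ℤ) - (nu k:ℤ)) :=
        Ffn_congr (by rw [hT' (nu k + 1), if_pos rfl, htc,
            show k - 1 + 1 = k from by omega]) (by push_cast; ring)
      have hhead : Ffn Q q1 q2 ((i:ℤ) - transposeFn (Nn+1) nu (nu k + 1))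
            ((lam i:ℤ) - (nu k + 1 : ℕ) + 1)
          = Ffn Q q1 q2 ((i:ℤ) + 1 - k) ((lam i:ℤ) - (nu k:ℤ)) :=
        Ffn_congr (by rw [htc, show ((k - 1 : ℕ):ℤ) = (k:ℤ) - 1 from by omega]; ring)
          (by push_cast; ring)
      rw [hhead', hhead]
      ring
    · -- i = k
      subst hik
      rw [if_neg (by omega), if_neg (by omega), if_pos rfl]
      have hnuk : nu' i = nu i + 1 := by rw [hnu' i, if_pos rfl]
      rw [hnuk, Finset.prod_Icc_succ_top (show 1 ≤ nu i + 1 by omega)]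
      have hin : (∏ j ∈ Finset.Icc 1 (nu i),
            Ffn Q q1 q2 ((i:ℤ) - transposeFn (Nn+1) nu' j) ((lam i:ℤ) - j + 1))
          = ∏ j ∈ Finset.Icc 1 (nu i),
              Ffn Q q1 q2 ((i:ℤ) - transposeFn (Nn+1) nu j) ((lam i:ℤ) - j + 1) :=
        Finset.prod_congr rfl fun j hj => by
          simp only [Finset.mem_Icc] at hj
          rw [hT' j, if_neg (by omega), add_zero]
      rw [hin]
      have hhead : Ffn Q q1 q2 ((i:ℤ) - transposeFn (Nn+1) nu' (nu i + 1))
            ((lam i:ℤ) - (nu i + 1 : ℕ) + 1)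
          = Ffn Q q1 q2 0 ((lam i:ℤ) - (nu i:ℤ)) :=
        Ffn_congr (by rw [hT' (nu i + 1), if_pos rfl, htc,
            show i - 1 + 1 = i from by omega]; exact sub_self _) (by push_cast; ring)
      rw [hhead]
      ring
    · -- i > k
      rw [if_neg (by omega), if_neg (by omega), if_neg (by omega), mul_one, mul_one]
      have hnui : nu' i = nu i := by rw [hnu' i, if_neg (by omega)]
      rw [hnui]
      exact Finset.prod_congr rfl fun j hj => by
        simp only [Finset.mem_Icc] at hj
        have := hnu k i (by omega)
        rw [hT' j, if_neg (by omega), add_zero]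
  calc (∏ i ∈ Finset.Icc 1 (Nn+1), ∏ j ∈ Finset.Icc 1 (nu' i),
          Ffn Q q1 q2 ((i:ℤ) - transposeFn (Nn+1) nu' j) ((lam i:ℤ) - j + 1))
        * ∏ i ∈ Finset.Icc 1 (k-1), Ffn Q q1 q2 ((i:ℤ) + 1 - k) ((lam i:ℤ) - (nu k:ℤ))
      = (∏ i ∈ Finset.Icc 1 (Nn+1), ∏ j ∈ Finset.Icc 1 (nu' i),
          Ffn Q q1 q2 ((i:ℤ) - transposeFn (Nn+1) nu' j) ((lam i:ℤ) - j + 1))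
        * ∏ i ∈ Finset.Icc 1 (Nn+1),
            (if i ≤ k - 1 then Ffn Q q1 q2 ((i:ℤ) + 1 - k) ((lam i:ℤ) - (nu k:ℤ)) else 1) := by
        rw [hx]
    _ = ∏ i ∈ Finset.Icc 1 (Nn+1),
          ((∏ j ∈ Finset.Icc 1 (nu' i),
            Ffn Q q1 q2 ((i:ℤ) - transposeFn (Nn+1) nu' j) ((lam i:ℤ) - j + 1))
          * (if i ≤ k - 1 then Ffn Q q1 q2 ((i:ℤ) + 1 - k) ((lam i:ℤ) - (nu k:ℤ)) else 1)) := by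
        rw [← Finset.prod_mul_distrib]
    _ = ∏ i ∈ Finset.Icc 1 (Nn+1),
          ((∏ j ∈ Finset.Icc 1 (nu i),
            Ffn Q q1 q2 ((i:ℤ) - transposeFn (Nn+1) nu j) ((lam i:ℤ) - j + 1))
          * (if i ≤ k - 1 then Ffn Q q1 q2 ((i:ℤ) - k) ((lam i:ℤ) - (nu k:ℤ))
              else if i = k then Ffn Q q1 q2 0 ((lam k:ℤ) - (nu k:ℤ)) else 1)) :=
        Finset.prod_congr rfl hrow
    _ = (∏ i ∈ Finset.Icc 1 (Nn+1), ∏ j ∈ Finset.Icc 1 (nu i),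
          Ffn Q q1 q2 ((i:ℤ) - transposeFn (Nn+1) nu j) ((lam i:ℤ) - j + 1))
        * ∏ i ∈ Finset.Icc 1 (Nn+1),
            (if i ≤ k - 1 then Ffn Q q1 q2 ((i:ℤ) - k) ((lam i:ℤ) - (nu k:ℤ))
              else if i = k then Ffn Q q1 q2 0 ((lam k:ℤ) - (nu k:ℤ)) else 1) :=
        Finset.prod_mul_distrib
    _ = (∏ i ∈ Finset.Icc 1 Nn, ∏ j ∈ Finset.Icc 1 (nu i),
          Ffn Q q1 q2 ((i:ℤ) - transposeFn Nn nu j) ((lam i:ℤ) - j + 1))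
        * (Ffn Q q1 q2 0 ((lam k:ℤ) - (nu k:ℤ))
          * ∏ i ∈ Finset.Icc 1 (k-1), Ffn Q q1 q2 ((i:ℤ) - k) ((lam i:ℤ) - (nu k:ℤ))) := by
        rw [hy, ← hP2]

/-- Let `λ, ν` be partitions, `q1, q2, u1, u2 ∈ ℂˣ` generic, and let
`s = (k, ν_k + 1)` be an addable box of `ν` with content `χ_s = u2 q1^{k-1} q2^{ν_k}`.
Then `N_{λ,ν+s}(u1/u2; q1,q2) / N_{λν}(u1/u2; q1,q2) = Y_λ(χ_s, u1)`, where
`Y_λ(z,u) = (1 - u/z) ∏_{(i,j)∈λ} S(u q1^{i-1} q2^{j-1}/z)` and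
`S(w) = (1-q1 w)(1-q2 w)/((1-w)(1-q1 q2 w))`. -/
theorem stmt18 (q1 q2 u1 u2 : ℂ)
    (hq1 : q1 ≠ 0) (hq2 : q2 ≠ 0) (hu1 : u1 ≠ 0) (hu2 : u2 ≠ 0)
    (Nl Nn : ℕ) (lam nu : ℕ → ℕ)
    (hlam : ∀ i j : ℕ, i ≤ j → lam j ≤ lam i) (hNl : ∀ i : ℕ, Nl < i → lam i = 0)
    (hnu : ∀ i j : ℕ, i ≤ j → nu j ≤ nu i) (hNn : ∀ i : ℕ, Nn < i → nu i = 0)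
    (k : ℕ) (hk1 : 1 ≤ k) (hk2 : k ≤ Nn + 1)
    (haddable : k = 1 ∨ nu k < nu (k - 1))
    (nu' : ℕ → ℕ) (hnu' : ∀ i : ℕ, nu' i = if i = k then nu i + 1 else nu i)
    (χs : ℂ) (hχs : χs = u2 * q1 ^ (k - 1) * q2 ^ (nu k))
    (S : ℂ → ℂ)
    (hS : ∀ w : ℂ, S w = ((1 - q1 * w) * (1 - q2 * w)) / ((1 - w) * (1 - q1 * q2 * w)))
    (hgen : ∀ i j : ℕ, 1 ≤ i → 1 ≤ j → j ≤ lam i →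
      1 - (u1 * q1 ^ (i - 1) * q2 ^ (j - 1)) / χs ≠ 0 ∧
      1 - q1 * q2 * (u1 * q1 ^ (i - 1) * q2 ^ (j - 1)) / χs ≠ 0)
    (hne : nek (u1 / u2) q1 q2 Nl Nn lam nu ≠ 0) :
    nek (u1 / u2) q1 q2 Nl (Nn + 1) lam nu' / nek (u1 / u2) q1 q2 Nl Nn lam nu
      = (1 - u1 / χs) *
          ∏ i ∈ Finset.Icc 1 Nl, ∏ j ∈ Finset.Icc 1 (lam i),
            S ((u1 * q1 ^ (i - 1) * q2 ^ (j - 1)) / χs) := by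
  have hQ : u1 / u2 ≠ 0 := div_ne_zero hu1 hu2
  have hχ : χs ≠ 0 := by
    rw [hχs]
    exact mul_ne_zero (mul_ne_zero hu2 (pow_ne_zero _ hq1)) (pow_ne_zero _ hq2)
  set Q := u1 / u2 with hQdef
  have hu1Q : u1 = Q * u2 := by
    rw [hQdef]
    field_simp
  have hzp1 : ∀ a : ℕ, 1 ≤ a → (q1 : ℂ) ^ (a - 1 : ℕ) = q1 ^ ((a:ℤ) - 1) := by
    intro a ha
    rw [← zpow_natCast]
    congr 1
    omega
  have hzp2 : ∀ a : ℕ, 1 ≤ a → (q2 : ℂ) ^ (a - 1 : ℕ) = q2 ^ ((a:ℤ) - 1) := by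
    intro a ha
    rw [← zpow_natCast]
    congr 1
    omega
  have hw : ∀ i j : ℕ, 1 ≤ i → 1 ≤ j →
      u1 * q1 ^ (i - 1) * q2 ^ (j - 1) / χs
        = Q * q1 ^ ((i:ℤ) - k) * q2 ^ ((j:ℤ) - 1 - (nu k:ℤ)) := by
    intro i j hi hj
    rw [hχs, hzp1 i hi, hzp2 j hj, hzp1 k hk1,
        show (q2:ℂ) ^ (nu k) = q2 ^ ((nu k : ℤ)) from (zpow_natCast _ _).symm]
    rw [div_eq_iff (mul_ne_zero (mul_ne_zero hu2 (zpow_ne_zero _ hq1)) (zpow_ne_zero _ hq2))]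
    have e1 : (q1:ℂ) ^ ((i:ℤ) - k) * q1 ^ ((k:ℤ) - 1) = q1 ^ ((i:ℤ) - 1) := by
      rw [← zpow_add₀ hq1]
      congr 1
      ring
    have e2 : (q2:ℂ) ^ ((j:ℤ) - 1 - (nu k:ℤ)) * q2 ^ ((nu k:ℤ)) = q2 ^ ((j:ℤ) - 1) := by
      rw [← zpow_add₀ hq2]
      congr 1
      ring
    rw [← e1, ← e2, hu1Q]
    ring
  have hchi : 1 - u1 / χs = Ffn Q q1 q2 (1 - (k:ℤ)) (-(nu k:ℤ)) := by
    simp only [Ffn]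
    congr 1
    rw [hχs, hzp1 k hk1,
        show (q2:ℂ) ^ (nu k) = q2 ^ ((nu k : ℤ)) from (zpow_natCast _ _).symm]
    rw [div_eq_iff (mul_ne_zero (mul_ne_zero hu2 (zpow_ne_zero _ hq1)) (zpow_ne_zero _ hq2))]
    have e1 : (q1:ℂ) ^ (1 - (k:ℤ)) * q1 ^ ((k:ℤ) - 1) = 1 := by
      rw [← zpow_add₀ hq1, show (1 - (k:ℤ)) + ((k:ℤ) - 1) = 0 from by ring, zpow_zero]
    have e2 : (q2:ℂ) ^ (-(nu k:ℤ)) * q2 ^ ((nu k:ℤ)) = 1 := by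
      rw [← zpow_add₀ hq2, show (-(nu k:ℤ)) + ((nu k:ℤ)) = 0 from by ring, zpow_zero]
    calc u1 = Q * u2 * ((q1:ℂ) ^ (1 - (k:ℤ)) * q1 ^ ((k:ℤ) - 1))
          * ((q2:ℂ) ^ (-(nu k:ℤ)) * q2 ^ ((nu k:ℤ))) := by
            rw [e1, e2, hu1Q]
            ring
      _ = Q * q1 ^ (1 - (k:ℤ)) * q2 ^ (-(nu k:ℤ))
          * (u2 * q1 ^ ((k:ℤ) - 1) * q2 ^ ((nu k:ℤ))) := by ring
  have hne0 := hne
  rw [nek_eq Q q1 q2 Nl Nn lam nu] at hne0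
  obtain ⟨hP1ne, hP2ne⟩ := mul_ne_zero_iff.mp hne0
  have hX1ne : (∏ j ∈ Finset.Icc 1 (lam k), Ffn Q q1 q2 ((transposeFn Nl lam j : ℤ) + 1 - k) ((j:ℤ) - (nu k:ℤ))) ≠ 0 := by
    by_cases hkN : k ≤ Nl
    · rw [Finset.prod_ne_zero_iff]
      intro j hj
      have h1 := Finset.prod_ne_zero_iff.mp hP1ne k (by simp only [Finset.mem_Icc]; omega)
      have h2 := Finset.prod_ne_zero_iff.mp h1 j hj
      rw [show (transposeFn Nl lam j:ℤ) + 1 - k = (transposeFn Nl lam j:ℤ) - k + 1 from by ring]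
      exact h2
    · rw [hNl k (by omega), show Finset.Icc 1 0 = ∅ from Finset.Icc_eq_empty (by omega),
        Finset.prod_empty]
      exact one_ne_zero
  have hX2ne : (∏ i ∈ Finset.Icc 1 (k-1), Ffn Q q1 q2 ((i:ℤ) + 1 - k) ((lam i:ℤ) - (nu k:ℤ))) ≠ 0 := by
    rw [Finset.prod_ne_zero_iff]
    intro i hi
    simp only [Finset.mem_Icc] at hi
    have haddable' : nu k + 1 ≤ nu i := by
      rcases haddable with h | h
      · omega
      · have := hnu i (k-1) hi.2; omega
    have h1 := Finset.prod_ne_zero_iff.mp hP2ne i (by simp only [Finset.mem_Icc]; omega)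
    have h2 := Finset.prod_ne_zero_iff.mp h1 (nu k + 1)
      (by simp only [Finset.mem_Icc]; omega)
    have htcNn : transposeFn Nn nu (nu k + 1) = k - 1 := by
      rw [← trans_stable Nn (Nn+1) (by omega) nu hNn (nu k + 1) (by omega)]
      exact trans_at_c Nn k nu hnu hk1 hk2 haddable
    rw [htcNn] at h2
    rw [show ((i:ℤ) + 1 - k) = (i:ℤ) - ((k-1:ℕ):ℤ) from by
          rw [show ((k-1:ℕ):ℤ) = (k:ℤ) - 1 from by omega]; ring,
        show ((lam i:ℤ) - (nu k:ℤ)) = (lam i:ℤ) - ((nu k + 1:ℕ):ℤ) + 1 from by push_cast; ring]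
    exact h2
  have hL1 : (∏ i ∈ Finset.Icc 1 Nl, ∏ j ∈ Finset.Icc 1 (lam i), Ffn Q q1 q2 ((transposeFn Nl lam j : ℤ) - i + 1) ((j:ℤ) - nu' i)) * (∏ j ∈ Finset.Icc 1 (lam k), Ffn Q q1 q2 ((transposeFn Nl lam j : ℤ) + 1 - k) ((j:ℤ) - (nu k:ℤ))) = (∏ i ∈ Finset.Icc 1 Nl, ∏ j ∈ Finset.Icc 1 (lam i), Ffn Q q1 q2 ((transposeFn Nl lam j : ℤ) - i + 1) ((j:ℤ) - nu i)) * (∏ j ∈ Finset.Icc 1 (lam k), Ffn Q q1 q2 ((transposeFn Nl lam j : ℤ) + 1 - k) ((j:ℤ) - 1 - (nu k:ℤ))) := L1 Q q1 q2 Nl lam hNl k hk1 nu nu' hnu'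
  have hL2 : (∏ i ∈ Finset.Icc 1 (Nn+1), ∏ j ∈ Finset.Icc 1 (nu' i), Ffn Q q1 q2 ((i:ℤ) - transposeFn (Nn+1) nu' j) ((lam i:ℤ) - j + 1)) * (∏ i ∈ Finset.Icc 1 (k-1), Ffn Q q1 q2 ((i:ℤ) + 1 - k) ((lam i:ℤ) - (nu k:ℤ))) = (∏ i ∈ Finset.Icc 1 Nn, ∏ j ∈ Finset.Icc 1 (nu i), Ffn Q q1 q2 ((i:ℤ) - transposeFn Nn nu j) ((lam i:ℤ) - j + 1)) * ((Ffn Q q1 q2 0 ((lam k:ℤ) - (nu k:ℤ))) * (∏ i ∈ Finset.Icc 1 (k-1), Ffn Q q1 q2 ((i:ℤ) - k) ((lam i:ℤ) - (nu k:ℤ)))) :=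
    L2 Q q1 q2 Nn lam nu hnu hNn k hk1 hk2 haddable nu' hnu'
  have hL3 : (∏ j ∈ Finset.Icc 1 (lam k), Ffn Q q1 q2 ((transposeFn Nl lam j : ℤ) + 1 - k) ((j:ℤ) - 1 - (nu k:ℤ))) * (Ffn Q q1 q2 0 ((lam k:ℤ) - (nu k:ℤ))) * (∏ i ∈ Finset.Icc 1 (k-1), Ffn Q q1 q2 ((i:ℤ) - k) ((lam i:ℤ) - (nu k:ℤ))) * (∏ i ∈ Finset.Icc 1 Nl, ∏ j ∈ Finset.Icc 1 (lam i), (Ffn Q q1 q2 ((i:ℤ) - k) ((j:ℤ) - 1 - (nu k:ℤ)) * Ffn Q q1 q2 ((i:ℤ) + 1 - k) ((j:ℤ) - (nu k:ℤ)))) = (∏ j ∈ Finset.Icc 1 (lam k), Ffn Q q1 q2 ((transposeFn Nl lam j : ℤ) + 1 - k) ((j:ℤ) - (nu k:ℤ))) * (∏ i ∈ Finset.Icc 1 (k-1), Ffn Q q1 q2 ((i:ℤ) + 1 - k) ((lam i:ℤ) - (nu k:ℤ))) * (Ffn Q q1 q2 (1 - (k:ℤ)) (-(nu k:ℤ)))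 * (∏ i ∈ Finset.Icc 1 Nl, ∏ j ∈ Finset.Icc 1 (lam i), (Ffn Q q1 q2 ((i:ℤ) + 1 - k) ((j:ℤ) - 1 - (nu k:ℤ)) * Ffn Q q1 q2 ((i:ℤ) - k) ((j:ℤ) - (nu k:ℤ)))) :=
    L3_c (Ffn Q q1 q2) lam hlam Nl hNl k hk1 ((nu k : ℤ))
  have hKEY : nek Q q1 q2 Nl (Nn+1) lam nu' * (∏ i ∈ Finset.Icc 1 Nl, ∏ j ∈ Finset.Icc 1 (lam i), (Ffn Q q1 q2 ((i:ℤ) - k) ((j:ℤ) - 1 - (nu k:ℤ)) * Ffn Q q1 q2 ((i:ℤ) + 1 - k) ((j:ℤ) - (nu k:ℤ))))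
      = nek Q q1 q2 Nl Nn lam nu * ((Ffn Q q1 q2 (1 - (k:ℤ)) (-(nu k:ℤ))) * (∏ i ∈ Finset.Icc 1 Nl, ∏ j ∈ Finset.Icc 1 (lam i), (Ffn Q q1 q2 ((i:ℤ) + 1 - k) ((j:ℤ) - 1 - (nu k:ℤ)) * Ffn Q q1 q2 ((i:ℤ) - k) ((j:ℤ) - (nu k:ℤ))))) := by
    rw [nek_eq Q q1 q2 Nl (Nn+1) lam nu', nek_eq Q q1 q2 Nl Nn lam nu]
    apply mul_right_cancel₀ (mul_ne_zero hX1ne hX2ne)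
    calc (∏ i ∈ Finset.Icc 1 Nl, ∏ j ∈ Finset.Icc 1 (lam i), Ffn Q q1 q2 ((transposeFn Nl lam j : ℤ) - i + 1) ((j:ℤ) - nu' i)) * (∏ i ∈ Finset.Icc 1 (Nn+1), ∏ j ∈ Finset.Icc 1 (nu' i), Ffn Q q1 q2 ((i:ℤ) - transposeFn (Nn+1) nu' j) ((lam i:ℤ) - j + 1)) * (∏ i ∈ Finset.Icc 1 Nl, ∏ j ∈ Finset.Icc 1 (lam i), (Ffn Q q1 q2 ((i:ℤ) - k) ((j:ℤ) - 1 - (nu k:ℤ)) * Ffn Q q1 q2 ((i:ℤ) + 1 - k) ((j:ℤ) - (nu k:ℤ)))) * ((∏ j ∈ Finset.Icc 1 (lam k), Ffn Q q1 q2 ((transposeFn Nl lam j : ℤ) + 1 - k) ((j:ℤ) - (nu k:ℤ))) * (∏ i ∈ Finset.Icc 1 (k-1), Ffn Q q1 q2 ((i:ℤ) + 1 - k) ((lam i:ℤ) - (nu k:ℤ))))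
        = ((∏ i ∈ Finset.Icc 1 Nl, ∏ j ∈ Finset.Icc 1 (lam i), Ffn Q q1 q2 ((transposeFn Nl lam j : ℤ) - i + 1) ((j:ℤ) - nu' i)) * (∏ j ∈ Finset.Icc 1 (lam k), Ffn Q q1 q2 ((transposeFn Nl lam j : ℤ) + 1 - k) ((j:ℤ) - (nu k:ℤ)))) * (((∏ i ∈ Finset.Icc 1 (Nn+1), ∏ j ∈ Finset.Icc 1 (nu' i), Ffn Q q1 q2 ((i:ℤ) - transposeFn (Nn+1) nu' j) ((lam i:ℤ) - j + 1)) * (∏ i ∈ Finset.Icc 1 (k-1), Ffn Q q1 q2 ((i:ℤ) + 1 - k) ((lam i:ℤ) - (nu k:ℤ)))) * (∏ i ∈ Finset.Icc 1 Nl, ∏ j ∈ Finset.Icc 1 (lam i), (Ffn Q q1 q2 ((i:ℤ) - k) ((j:ℤ) - 1 - (nu k:ℤ)) * Ffn Q q1 q2 ((i:ℤ) + 1 - k) ((j:ℤ) - (nu k:ℤ))))) := by ring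
      _ = ((∏ i ∈ Finset.Icc 1 Nl, ∏ j ∈ Finset.Icc 1 (lam i), Ffn Q q1 q2 ((transposeFn Nl lam j : ℤ) - i + 1) ((j:ℤ) - nu i)) * (∏ j ∈ Finset.Icc 1 (lam k), Ffn Q q1 q2 ((transposeFn Nl lam j : ℤ) + 1 - k) ((j:ℤ) - 1 - (nu k:ℤ)))) * (((∏ i ∈ Finset.Icc 1 Nn, ∏ j ∈ Finset.Icc 1 (nu i), Ffn Q q1 q2 ((i:ℤ) - transposeFn Nn nu j) ((lam i:ℤ) - j + 1)) * ((Ffn Q q1 q2 0 ((lam k:ℤ) - (nu k:ℤ))) * (∏ i ∈ Finset.Icc 1 (k-1), Ffn Q q1 q2 ((i:ℤ) - k) ((lam i:ℤ) - (nu k:ℤ))))) * (∏ i ∈ Finset.Icc 1 Nl, ∏ j ∈ Finset.Icc 1 (lam i), (Ffn Q q1 q2 ((i:ℤ) - k) ((j:ℤ) - 1 - (nu k:ℤ)) * Ffn Q q1 q2 ((i:ℤ) + 1 - k) ((j:ℤ) - (nu k:ℤ))))) := by rw [hL1, hL2]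
      _ = ((∏ i ∈ Finset.Icc 1 Nl, ∏ j ∈ Finset.Icc 1 (lam i), Ffn Q q1 q2 ((transposeFn Nl lam j : ℤ) - i + 1) ((j:ℤ) - nu i)) * (∏ i ∈ Finset.Icc 1 Nn, ∏ j ∈ Finset.Icc 1 (nu i), Ffn Q q1 q2 ((i:ℤ) - transposeFn Nn nu j) ((lam i:ℤ) - j + 1))) * ((∏ j ∈ Finset.Icc 1 (lam k), Ffn Q q1 q2 ((transposeFn Nl lam j : ℤ) + 1 - k) ((j:ℤ) - 1 - (nu k:ℤ))) * (Ffn Q q1 q2 0 ((lam k:ℤ) - (nu k:ℤ))) * (∏ i ∈ Finset.Icc 1 (k-1), Ffn Q q1 q2 ((i:ℤ) - k) ((lam i:ℤ) - (nu k:ℤ))) * (∏ i ∈ Finset.Icc 1 Nl, ∏ j ∈ Finset.Icc 1 (lam i), (Ffn Q q1 q2 ((i:ℤ) - k) ((j:ℤ) - 1 - (nu k:ℤ)) * Ffn Q q1 q2 ((i:ℤ) + 1 - k) ((j:ℤ) - (nu k:ℤ))))) := by ring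
      _ = ((∏ i ∈ Finset.Icc 1 Nl, ∏ j ∈ Finset.Icc 1 (lam i), Ffn Q q1 q2 ((transposeFn Nl lam j : ℤ) - i + 1) ((j:ℤ) - nu i)) * (∏ i ∈ Finset.Icc 1 Nn, ∏ j ∈ Finset.Icc 1 (nu i), Ffn Q q1 q2 ((i:ℤ) - transposeFn Nn nu j) ((lam i:ℤ) - j + 1))) * ((∏ j ∈ Finset.Icc 1 (lam k), Ffn Q q1 q2 ((transposeFn Nl lam j : ℤ) + 1 - k) ((j:ℤ) - (nu k:ℤ))) * (∏ i ∈ Finset.Icc 1 (k-1), Ffn Q q1 q2 ((i:ℤ) + 1 - k) ((lam i:ℤ) - (nu k:ℤ))) * (Ffn Q q1 q2 (1 - (k:ℤ)) (-(nu k:ℤ))) * (∏ i ∈ Finset.Icc 1 Nl, ∏ j ∈ Finset.Icc 1 (lam i), (Ffn Q q1 q2 ((i:ℤ) + 1 - k) ((j:ℤ) - 1 - (nu k:ℤ)) * Ffn Q q1 q2 ((i:ℤ) - k) ((j:ℤ) - (nu k:ℤ))))) := by rw [hL3]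
      _ = (∏ i ∈ Finset.Icc 1 Nl, ∏ j ∈ Finset.Icc 1 (lam i), Ffn Q q1 q2 ((transposeFn Nl lam j : ℤ) - i + 1) ((j:ℤ) - nu i)) * (∏ i ∈ Finset.Icc 1 Nn, ∏ j ∈ Finset.Icc 1 (nu i), Ffn Q q1 q2 ((i:ℤ) - transposeFn Nn nu j) ((lam i:ℤ) - j + 1)) * ((Ffn Q q1 q2 (1 - (k:ℤ)) (-(nu k:ℤ))) * (∏ i ∈ Finset.Icc 1 Nl, ∏ j ∈ Finset.Icc 1 (lam i), (Ffn Q q1 q2 ((i:ℤ) + 1 - k) ((j:ℤ) - 1 - (nu k:ℤ)) * Ffn Q q1 q2 ((i:ℤ) - k) ((j:ℤ) - (nu k:ℤ))))) * ((∏ j ∈ Finset.Icc 1 (lam k), Ffn Q q1 q2 ((transposeFn Nl lam j : ℤ) + 1 - k) ((j:ℤ) - (nu k:ℤ))) * (∏ i ∈ Finset.Icc 1 (k-1), Ffn Q q1 q2 ((i:ℤ) + 1 - k) ((lam i:ℤ) - (nu k:ℤ)))) := by ring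
  have hFe0 : ∀ i j : ℕ, 1 ≤ i → 1 ≤ j →
      Ffn Q q1 q2 ((i:ℤ) - k) ((j:ℤ) - 1 - (nu k:ℤ)) = 1 - u1 * q1 ^ (i - 1) * q2 ^ (j - 1) / χs := by
    intro i j hi hj
    rw [hw i j hi hj]
    simp only [Ffn]
  have hFe1 : ∀ i j : ℕ, 1 ≤ i → 1 ≤ j →
      Ffn Q q1 q2 ((i:ℤ) + 1 - k) ((j:ℤ) - 1 - (nu k:ℤ)) = 1 - q1 * (u1 * q1 ^ (i - 1) * q2 ^ (j - 1) / χs) := by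
    intro i j hi hj
    rw [hw i j hi hj]
    simp only [Ffn]
    rw [show ((i:ℤ) + 1 - k) = ((i:ℤ) - k) + 1 from by ring, zpow_add_one₀ hq1]
    ring
  have hFe2 : ∀ i j : ℕ, 1 ≤ i → 1 ≤ j →
      Ffn Q q1 q2 ((i:ℤ) - k) ((j:ℤ) - (nu k:ℤ)) = 1 - q2 * (u1 * q1 ^ (i - 1) * q2 ^ (j - 1) / χs) := by
    intro i j hi hj
    rw [hw i j hi hj]
    simp only [Ffn]
    rw [show ((j:ℤ) - (nu k:ℤ)) = ((j:ℤ) - 1 - (nu k:ℤ)) + 1 from by ring, zpow_add_one₀ hq2]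
    ring
  have hFe3 : ∀ i j : ℕ, 1 ≤ i → 1 ≤ j →
      Ffn Q q1 q2 ((i:ℤ) + 1 - k) ((j:ℤ) - (nu k:ℤ)) = 1 - q1 * q2 * (u1 * q1 ^ (i - 1) * q2 ^ (j - 1) / χs) := by
    intro i j hi hj
    rw [hw i j hi hj]
    simp only [Ffn]
    rw [show ((i:ℤ) + 1 - k) = ((i:ℤ) - k) + 1 from by ring, zpow_add_one₀ hq1,
        show ((j:ℤ) - (nu k:ℤ)) = ((j:ℤ) - 1 - (nu k:ℤ)) + 1 from by ring, zpow_add_one₀ hq2]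
    ring
  have hDne : (∏ i ∈ Finset.Icc 1 Nl, ∏ j ∈ Finset.Icc 1 (lam i), (Ffn Q q1 q2 ((i:ℤ) - k) ((j:ℤ) - 1 - (nu k:ℤ)) * Ffn Q q1 q2 ((i:ℤ) + 1 - k) ((j:ℤ) - (nu k:ℤ)))) ≠ 0 := by
    rw [Finset.prod_ne_zero_iff]
    intro i hi
    rw [Finset.prod_ne_zero_iff]
    intro j hj
    simp only [Finset.mem_Icc] at hi hj
    obtain ⟨hg1, hg2⟩ := hgen i j hi.1 hj.1 hj.2
    rw [mul_div_assoc] at hg2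
    apply mul_ne_zero
    · rw [hFe0 i j hi.1 hj.1]; exact hg1
    · rw [hFe3 i j hi.1 hj.1]; exact hg2
  have hprod : (∏ i ∈ Finset.Icc 1 Nl, ∏ j ∈ Finset.Icc 1 (lam i), S (u1 * q1 ^ (i - 1) * q2 ^ (j - 1) / χs)) * (∏ i ∈ Finset.Icc 1 Nl, ∏ j ∈ Finset.Icc 1 (lam i), (Ffn Q q1 q2 ((i:ℤ) - k) ((j:ℤ) - 1 - (nu k:ℤ)) * Ffn Q q1 q2 ((i:ℤ) + 1 - k) ((j:ℤ) - (nu k:ℤ)))) = (∏ i ∈ Finset.Icc 1 Nl, ∏ j ∈ Finset.Icc 1 (lam i), (Ffn Q q1 q2 ((i:ℤ) + 1 - k) ((j:ℤ) - 1 - (nu k:ℤ)) * Ffn Q q1 q2 ((i:ℤ) - k) ((j:ℤ) - (nu k:ℤ)))) := by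
    rw [← Finset.prod_mul_distrib]
    refine Finset.prod_congr rfl fun i hi => ?_
    rw [← Finset.prod_mul_distrib]
    refine Finset.prod_congr rfl fun j hj => ?_
    simp only [Finset.mem_Icc] at hi hj
    obtain ⟨hg1, hg2⟩ := hgen i j hi.1 hj.1 hj.2
    rw [mul_div_assoc] at hg2
    rw [hS, hFe0 i j hi.1 hj.1, hFe1 i j hi.1 hj.1, hFe2 i j hi.1 hj.1, hFe3 i j hi.1 hj.1]
    exact div_mul_cancel₀ _ (mul_ne_zero hg1 hg2)
  have hfinal : nek Q q1 q2 Nl (Nn+1) lam nu' * (∏ i ∈ Finset.Icc 1 Nl, ∏ j ∈ Finset.Icc 1 (lam i), (Ffn Q q1 q2 ((i:ℤ) - k) ((j:ℤ) - 1 - (nu k:ℤ)) * Ffn Q q1 q2 ((i:ℤ) + 1 - k) ((j:ℤ) - (nu k:ℤ))))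
      = (1 - u1 / χs) * (∏ i ∈ Finset.Icc 1 Nl, ∏ j ∈ Finset.Icc 1 (lam i), S (u1 * q1 ^ (i - 1) * q2 ^ (j - 1) / χs)) * nek Q q1 q2 Nl Nn lam nu * (∏ i ∈ Finset.Icc 1 Nl, ∏ j ∈ Finset.Icc 1 (lam i), (Ffn Q q1 q2 ((i:ℤ) - k) ((j:ℤ) - 1 - (nu k:ℤ)) * Ffn Q q1 q2 ((i:ℤ) + 1 - k) ((j:ℤ) - (nu k:ℤ)))) := by
    rw [hKEY, ← hchi, ← hprod]
    ring
  rw [div_eq_iff hne]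
  exact mul_right_cancel₀ hDne hfinal
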